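/- Let X ⊆ ℤ² and let a, b ∈ X be the endpoints of a slanted digital line segment P ⊆ X. Let f : X → X be c₂-continuous with f(a) = a and f(b) = b. Then f(x) = x for every x ∈ P. -/
import Mathlib


/-- Two points of `ℤ²` are `c_u`-adjacent: they are distinct, differ by at most 1 in each
coordinate, and differ in at most `u` coordinates. -/
def adj2 (u : ℕ) (x y : ℤ × ℤ) : Prop :=
  x ≠ y ∧ |x.1 - y.1| ≤ 1 ∧ |x.2 - y.2| ≤ 1 ∧
    ((if x.1 = y.1 then 0 else 1) + (if x.2 = y.2 then 0 else 1) : ℕ) ≤ u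

/-- `f` is `c_u`-continuous on `X ⊆ ℤ²`. -/
def DigContinuous2 (u : ℕ) (X : Set (ℤ × ℤ)) (f : ℤ × ℤ → ℤ × ℤ) : Prop :=
  ∀ x ∈ X, ∀ y ∈ X, adj2 u x y → f x = f y ∨ adj2 u (f x) (f y)

/-- `A` is a freezing set for `(X, c_u)`: every `c_u`-continuous self-map of `X`
fixing `A` pointwise is the identity on `X`. -/
def FreezingSet2 (u : ℕ) (X A : Set (ℤ × ℤ)) : Prop :=
  A ⊆ X ∧ ∀ f : ℤ × ℤ → ℤ × ℤ, Set.MapsTo f X X → DigContinuous2 u X f →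
    (∀ a ∈ A, f a = a) → ∀ x ∈ X, f x = x

/-- `A` is a minimal freezing set for `(X, c_u)`. -/
def MinFreezingSet2 (u : ℕ) (X A : Set (ℤ × ℤ)) : Prop :=
  FreezingSet2 u X A ∧ ∀ A' ⊂ A, ¬ FreezingSet2 u X A'

/-- `q` is a close `c_u`-neighbor of `p` in `X`. -/
def CloseNbr2 (u : ℕ) (X : Set (ℤ × ℤ)) (p q : ℤ × ℤ) : Prop :=
  p ∈ X ∧ q ∈ X ∧ p ≠ q ∧ ∀ x ∈ X, adj2 u x p → x = q ∨ adj2 u x q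

/-- A `c_u`-path of length `k` in `Y` from `a` to `b`. -/
def IsPathIn2 (u : ℕ) (Y : Set (ℤ × ℤ)) (k : ℕ) (s : Fin (k + 1) → ℤ × ℤ)
    (a b : ℤ × ℤ) : Prop :=
  (∀ i, s i ∈ Y) ∧ s 0 = a ∧ s (Fin.last k) = b ∧
    ∀ i : Fin k, s i.castSucc = s i.succ ∨ adj2 u (s i.castSucc) (s i.succ)

/-- `Y` is `c_u`-connected. -/
def ConnectedIn2 (u : ℕ) (Y : Set (ℤ × ℤ)) : Prop :=
  ∀ a ∈ Y, ∀ b ∈ Y, ∃ k s, IsPathIn2 u Y k s a b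

/-- `C` is a `c_u`-connected component of `Y`: a maximal `c_u`-connected subset. -/
def IsComponent2 (u : ℕ) (Y C : Set (ℤ × ℤ)) : Prop :=
  C ⊆ Y ∧ C.Nonempty ∧ ConnectedIn2 u C ∧
    ∀ C', C ⊆ C' → C' ⊆ Y → ConnectedIn2 u C' → C' = C

/-- `S` is a digital `c₂`-closed curve: the trace of an injective cyclic `c₂`-path. -/
def IsClosedCurve2 (S : Set (ℤ × ℤ)) : Prop :=
  ∃ m : ℕ, 0 < m ∧ ∃ s : ZMod m → ℤ × ℤ, Function.Injective s ∧ Set.range s = S ∧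
    ∀ i, s i = s (i + 1) ∨ adj2 2 (s i) (s (i + 1))

/-- `S` is a bounding curve of the digital disk `D`: `S` is a `c₂`-closed curve,
`ℤ² \ S` has exactly two `c₁`-components, one finite (the interior `I`) and one
infinite, and `D = S ∪ I`. -/
def IsBoundingCurve (S D : Set (ℤ × ℤ)) : Prop :=
  IsClosedCurve2 S ∧ ∃ I E : Set (ℤ × ℤ), I ≠ E ∧ I.Finite ∧ E.Infinite ∧
    {C | IsComponent2 1 Sᶜ C} = {I, E} ∧ D = S ∪ I

/-- A digital line segment: a `c₂`-connected set of two or more collinear points. -/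
def IsSegment2 (T : Set (ℤ × ℤ)) : Prop :=
  ConnectedIn2 2 T ∧ (∃ p ∈ T, ∃ q ∈ T, p ≠ q) ∧
    ∃ a b c : ℤ, ¬(a = 0 ∧ b = 0) ∧ ∀ p ∈ T, a * p.1 + b * p.2 = c

/-- A horizontal digital line segment. -/
def HorizSeg (T : Set (ℤ × ℤ)) : Prop := IsSegment2 T ∧ ∀ p ∈ T, ∀ q ∈ T, p.2 = q.2

/-- A vertical digital line segment. -/
def VertSeg (T : Set (ℤ × ℤ)) : Prop := IsSegment2 T ∧ ∀ p ∈ T, ∀ q ∈ T, p.1 = q.1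

/-- A slanted digital line segment (slope `1` or `-1`). -/
def SlantSeg (T : Set (ℤ × ℤ)) : Prop := IsSegment2 T ∧
  ((∀ p ∈ T, ∀ q ∈ T, p.1 - q.1 = p.2 - q.2) ∨ (∀ p ∈ T, ∀ q ∈ T, p.1 - q.1 = -(p.2 - q.2)))

/-- `T` is a maximal horizontal segment of the curve `S`. -/
def MaxHorizSegOf (S T : Set (ℤ × ℤ)) : Prop :=
  T ⊆ S ∧ HorizSeg T ∧ ∀ T', T ⊆ T' → T' ⊆ S → HorizSeg T' → T' = T

/-- `T` is a maximal vertical segment of the curve `S`. -/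
def MaxVertSegOf (S T : Set (ℤ × ℤ)) : Prop :=
  T ⊆ S ∧ VertSeg T ∧ ∀ T', T ⊆ T' → T' ⊆ S → VertSeg T' → T' = T

/-- `T` is a maximal slanted segment of the curve `S`. -/
def MaxSlantSegOf (S T : Set (ℤ × ℤ)) : Prop :=
  T ⊆ S ∧ SlantSeg T ∧ ∀ T', T ⊆ T' → T' ⊆ S → SlantSeg T' → T' = T

/-- `p` is an endpoint of the segment `T`: it has at most one `c₂`-neighbor in `T`. -/
def IsEndpointOf (T : Set (ℤ × ℤ)) (p : ℤ × ℤ) : Prop :=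
  p ∈ T ∧ {q ∈ T | adj2 2 p q}.Subsingleton

/-- The canonical embedding `ℤ² → ℝ²`. -/
def toR2 (p : ℤ × ℤ) : ℝ × ℝ := ((p.1 : ℝ), (p.2 : ℝ))

/-- `D` is digitally convex: `D = H ∩ ℤ²`, where `H` is the convex hull of `D` in `ℝ²`. -/
def DigitallyConvex (D : Set (ℤ × ℤ)) : Prop :=
  ∀ p : ℤ × ℤ, toR2 p ∈ convexHull ℝ (toR2 '' D) → p ∈ D

/-- A unit horizontal or vertical direction. -/
def isAxisDir (d : ℤ × ℤ) : Prop := (|d.1| = 1 ∧ d.2 = 0) ∨ (d.1 = 0 ∧ |d.2| = 1)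

/-- A unit diagonal direction. -/
def isDiagDir (d : ℤ × ℤ) : Prop := |d.1| = 1 ∧ |d.2| = 1

def dot2 (d e : ℤ × ℤ) : ℤ := d.1 * e.1 + d.2 * e.2

/-- `e` is a king-move direction lying strictly inside the angle (of measure less than
180°) with side directions `d₁` and `d₂`. -/
def InSector (d₁ d₂ e : ℤ × ℤ) : Prop :=
  (isAxisDir e ∨ isDiagDir e) ∧ 0 ≤ dot2 e d₁ ∧ 0 ≤ dot2 e d₂ ∧ e ≠ d₁ ∧ e ≠ d₂

/-- `c` lies strictly on the same side of the line through `T` as some point of `I`. -/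
def InteriorSideOf (T I : Set (ℤ × ℤ)) (c : ℤ × ℤ) : Prop :=
  ∃ a b k : ℤ, (∀ q ∈ T, a * q.1 + b * q.2 = k) ∧ k < a * c.1 + b * c.2 ∧
    ∃ w ∈ I, k < a * w.1 + b * w.2

/-- `X` is thick with respect to its bounding curve `S` (whose interior is `X \ S`):
(i) every non-endpoint `p` of a maximal slanted segment of `S` has a point `c ∈ X`,
`c₂`- but not `c₁`-adjacent to `p`, on the interior side of the segment;
(ii) every vertex of a 90° interior angle of `S` with horizontal and vertical sides has
a point of the interior `c₂`- but not `c₁`-adjacent to it, and every vertex of a 90°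
interior angle with slanted sides has a point of the interior `c₁`-adjacent to it;
(iii) every vertex `p` of a 135° interior angle of `S` has points `b, b' ∈ X` inside the
angle with `b` `c₂`- but not `c₁`-adjacent to `p` and `b'` `c₁`-adjacent to `p`.
A vertex with side directions `d₁, d₂` has an interior angle (of measure < 180°)
when some king direction strictly inside the angle leads into `X`. -/
def ThickWRT (X S : Set (ℤ × ℤ)) : Prop :=
  (∀ T, MaxSlantSegOf S T → ∀ p ∈ T, ¬IsEndpointOf T p →
      ∃ c ∈ X, adj2 2 c p ∧ ¬adj2 1 c p ∧ InteriorSideOf T (X \ S) c) ∧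
  ∃ m : ℕ, 0 < m ∧ ∃ s : ZMod m → ℤ × ℤ, Function.Injective s ∧ Set.range s = S ∧
    (∀ i, s i = s (i + 1) ∨ adj2 2 (s i) (s (i + 1))) ∧
    ∀ i : ZMod m,
      (isAxisDir (s (i - 1) - s i) ∧ isAxisDir (s (i + 1) - s i) ∧
          dot2 (s (i - 1) - s i) (s (i + 1) - s i) = 0 ∧
          (∃ e, InSector (s (i - 1) - s i) (s (i + 1) - s i) e ∧ s i + e ∈ X) →
        ∃ q ∈ X \ S, adj2 2 q (s i) ∧ ¬adj2 1 q (s i)) ∧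
      (isDiagDir (s (i - 1) - s i) ∧ isDiagDir (s (i + 1) - s i) ∧
          dot2 (s (i - 1) - s i) (s (i + 1) - s i) = 0 ∧
          (∃ e, InSector (s (i - 1) - s i) (s (i + 1) - s i) e ∧ s i + e ∈ X) →
        ∃ q ∈ X \ S, adj2 1 q (s i)) ∧
      (((isAxisDir (s (i - 1) - s i) ∧ isDiagDir (s (i + 1) - s i)) ∨
          (isDiagDir (s (i - 1) - s i) ∧ isAxisDir (s (i + 1) - s i))) ∧
          dot2 (s (i - 1) - s i) (s (i + 1) - s i) = -1 ∧
          (∃ e, InSector (s (i - 1) - s i) (s (i + 1) - s i) e ∧ s i + e ∈ X) →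
        ∃ b b' : ℤ × ℤ, InSector (s (i - 1) - s i) (s (i + 1) - s i) b ∧
          InSector (s (i - 1) - s i) (s (i + 1) - s i) b' ∧
          s i + b ∈ X ∧ s i + b' ∈ X ∧
          adj2 2 (s i + b) (s i) ∧ ¬adj2 1 (s i + b) (s i) ∧ adj2 1 (s i + b') (s i))

lemma seq_dist_bound (g : ℕ → ℤ) (n : ℕ) (h : ∀ i < n, |g (i+1) - g i| ≤ 1) :
    ∀ i j, i ≤ j → j ≤ n → |g j - g i| ≤ (j : ℤ) - i := by
  intro i j hij hjn
  induction j with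
  | zero => interval_cases i; simp
  | succ m ih =>
    rcases Nat.lt_or_ge i (m+1) with hlt | hge
    · have h1 := h m (by omega)
      have h2 := ih (by omega) (by omega)
      rw [abs_le] at h1 h2 ⊢
      push_cast at h2 ⊢
      omega
    · have : i = m + 1 := by omega
      subst this; simp

lemma seq_ivt (g : ℕ → ℤ) (n : ℕ) (h : ∀ i < n, |g (i+1) - g i| ≤ 1)
    (t : ℤ) (h0 : g 0 ≤ t) (hn : t ≤ g n) : ∃ i ≤ n, g i = t := by
  induction n with
  | zero => exact ⟨0, le_refl 0, le_antisymm h0 hn⟩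
  | succ m ih =>
    rcases le_or_gt t (g m) with hle | hlt
    · obtain ⟨i, hi, hgi⟩ := ih (fun i hi => h i (by omega)) hle
      exact ⟨i, by omega, hgi⟩
    · have h1 := h m (by omega)
      rw [abs_le] at h1
      exact ⟨m+1, le_refl _, by omega⟩

lemma path_to_seq {u : ℕ} {Y : Set (ℤ × ℤ)} {k : ℕ} {s : Fin (k+1) → ℤ × ℤ} {a b : ℤ × ℤ}
    (h : IsPathIn2 u Y k s a b) :
    ∃ g : ℕ → ℤ × ℤ, g 0 = a ∧ g k = b ∧ (∀ i, g i ∈ Y) ∧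
      ∀ i < k, g i = g (i+1) ∨ adj2 u (g i) (g (i+1)) := by
  obtain ⟨hmem, h0, hlast, hstep⟩ := h
  refine ⟨fun i => s ⟨min i k, by omega⟩, ?_, ?_, fun i => hmem _, ?_⟩
  · have : (⟨min 0 k, by omega⟩ : Fin (k+1)) = 0 := by
      ext; simp
    dsimp only; rw [this]; exact h0
  · have : (⟨min k k, by omega⟩ : Fin (k+1)) = Fin.last k := by
      ext; simp [Fin.last]
    dsimp only; rw [this]; exact hlast
  · intro i hik
    have e1 : (⟨min i k, by omega⟩ : Fin (k+1)) = (⟨i, hik⟩ : Fin k).castSucc := by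
      ext; simp [Fin.castSucc, Fin.castAdd, Fin.castLE]; omega
    have e2 : (⟨min (i+1) k, by omega⟩ : Fin (k+1)) = (⟨i, hik⟩ : Fin k).succ := by
      ext; simp [Fin.succ]; omega
    dsimp only; rw [e1, e2]
    exact hstep ⟨i, hik⟩

lemma adj2_two_of {x y : ℤ × ℤ} (h1 : x ≠ y) (h2 : |x.1 - y.1| ≤ 1)
    (h3 : |x.2 - y.2| ≤ 1) : adj2 2 x y :=
  ⟨h1, h2, h3, by split_ifs <;> norm_num⟩

/-- If `a, b ∈ X ⊆ ℤ²` are the (distinct) endpoints of a slanted digital line segment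
`P ⊆ X` and `f : X → X` is `c₂`-continuous with `f a = a` and `f b = b`, then `f`
fixes every point of `P`. -/
theorem slanted_segment_frozen (X P : Set (ℤ × ℤ)) (hPX : P ⊆ X)
    (hseg : SlantSeg P) (a b : ℤ × ℤ) (hab : a ≠ b)
    (ha : IsEndpointOf P a) (hb : IsEndpointOf P b)
    (f : ℤ × ℤ → ℤ × ℤ) (hmaps : Set.MapsTo f X X) (hcont : DigContinuous2 2 X f)
    (hfa : f a = a) (hfb : f b = b) :
    ∀ x ∈ P, f x = x := by
  obtain ⟨⟨hconn, -, -⟩, hslope⟩ := hseg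
  -- the line through P: p.2 - a.2 = ε * (p.1 - a.1) with ε = ±1
  obtain ⟨ε, hε, hline⟩ : ∃ ε : ℤ, (ε = 1 ∨ ε = -1) ∧
      ∀ p ∈ P, p.2 - a.2 = ε * (p.1 - a.1) := by
    rcases hslope with hs | hs
    · exact ⟨1, Or.inl rfl, fun p hp => by have := hs p hp a ha.1; linarith⟩
    · exact ⟨-1, Or.inr rfl, fun p hp => by have := hs p hp a ha.1; linarith⟩
  -- each point of P is determined by its first coordinate
  have hpt : ∀ p ∈ P, p = (p.1, a.2 + ε * (p.1 - a.1)) := by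
    intro p hp
    have := hline p hp
    exact Prod.ext rfl (by dsimp; linarith)
  -- step bounds on first coordinates of a path
  have hstep1 : ∀ (g : ℕ → ℤ × ℤ) (k : ℕ),
      (∀ i < k, g i = g (i+1) ∨ adj2 2 (g i) (g (i+1))) →
      ∀ i < k, |(fun j => (g j).1) (i+1) - (fun j => (g j).1) i| ≤ 1 := by
    intro g k hg i hik
    rcases hg i hik with h | ⟨-, h, -, -⟩
    · simp [h]
    · rw [abs_sub_comm] at h; exact h
  -- an endpoint is extremal in the first coordinate
  have extreme : ∀ e : ℤ × ℤ, IsEndpointOf P e →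
      (∀ p ∈ P, p.1 ≤ e.1) ∨ (∀ p ∈ P, e.1 ≤ p.1) := by
    intro e he
    by_contra hcon
    push_neg at hcon
    obtain ⟨⟨p, hp, hpe⟩, ⟨q, hq, hqe⟩⟩ := hcon
    obtain ⟨k, s, hpath⟩ := hconn q hq p hp
    obtain ⟨g, hg0, hgk, hgmem, hgstep⟩ := path_to_seq hpath
    have hs1 := hstep1 g k hgstep
    have nbr : ∀ t : ℤ, t = e.1 - 1 ∨ t = e.1 + 1 →
        (t, a.2 + ε * (t - a.1)) ∈ {q ∈ P | adj2 2 e q} := by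
      intro t ht
      obtain ⟨i, hik, hgi⟩ := seq_ivt (fun j => (g j).1) k hs1 t
        (by simp only [hg0]; omega) (by simp only [hgk]; omega)
      have hgi' : (g i).1 = t := hgi
      have hgiP := hgmem i
      have hge : g i = (t, a.2 + ε * (t - a.1)) := by
        rw [hpt (g i) hgiP, hgi']
      rw [hge] at hgiP
      have hl := hline e he.1
      refine ⟨hgiP, adj2_two_of ?_ ?_ ?_⟩
      · intro hh
        have := congrArg Prod.fst hh
        simp at this; omega
      · dsimp; rw [abs_le]; omega
      · dsimp
        rcases hε with h | h <;> rcases ht with h' | h' <;> subst h <;> subst h' <;>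
          rw [abs_le] <;> constructor <;> linarith
    have h1 := nbr (e.1 - 1) (Or.inl rfl)
    have h2 := nbr (e.1 + 1) (Or.inr rfl)
    have := he.2 h1 h2
    have : (e.1 - 1 : ℤ) = e.1 + 1 := congrArg Prod.fst this
    omega
  -- key lemma: if u is the left endpoint and v the right, f fixes P
  have key : ∀ u v : ℤ × ℤ, u ∈ P → v ∈ P → f u = u → f v = v →
      (∀ p ∈ P, u.1 ≤ p.1 ∧ p.1 ≤ v.1) → ∀ x ∈ P, f x = x := by
    intro u v hu hv hfu hfv hbound x hx
    have huv : u.1 ≤ v.1 := (hbound u hu).2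
    set n : ℕ := (v.1 - u.1).toNat with hn
    have hvn : v.1 = u.1 + n := by rw [hn]; omega
    -- every intermediate lattice point of the segment is in P
    have hmem : ∀ t : ℤ, u.1 ≤ t → t ≤ v.1 → ((t, a.2 + ε * (t - a.1)) : ℤ × ℤ) ∈ P := by
      intro t h1 h2
      obtain ⟨k, s, hpath⟩ := hconn u hu v hv
      obtain ⟨g, hg0, hgk, hgmem, hgstep⟩ := path_to_seq hpath
      obtain ⟨i, hik, hgi⟩ := seq_ivt (fun j => (g j).1) k (hstep1 g k hgstep) t
        (by simp [hg0]; omega) (by simp [hgk]; omega)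
      have hgiP := hgmem i
      have : g i = (t, a.2 + ε * (t - a.1)) := by rw [hpt (g i) hgiP, hgi]
      rw [← this]; exact hgiP
    -- the diagonal chain from u to v
    set c : ℕ → ℤ × ℤ := fun i => (u.1 + min i n, a.2 + ε * (u.1 + min i n - a.1)) with hc
    have hcP : ∀ i, c i ∈ P := fun i => hmem _ (by omega) (by omega)
    have hc0 : c 0 = u := by
      rw [hc]; simp; rw [← hpt u hu]
    have hcn : c n = v := by
      rw [hc]; simp
      rw [show u.1 + (n:ℤ) = v.1 by omega, ← hpt v hv]
    have hcadj : ∀ i < n, adj2 2 (c i) (c (i+1)) := by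
      intro i hik
      have e1 : min i n = i := by omega
      have e2 : min (i+1) n = i+1 := by omega
      refine adj2_two_of ?_ ?_ ?_ <;> rw [hc] <;> dsimp <;> rw [e1, e2]
      · intro hh
        have h2 : u.1 + (i:ℤ) = u.1 + ((i+1 : ℕ):ℤ) := congrArg Prod.fst hh
        omega
      · push_cast; rw [abs_le]; constructor <;> linarith
      · rcases hε with h | h <;> subst h <;> push_cast <;> rw [abs_le] <;>
          constructor <;> linarith
    -- f along the chain
    set F : ℕ → ℤ × ℤ := fun i => f (c i) with hF
    have hFstep : ∀ i < n, F i = F (i+1) ∨ adj2 2 (F i) (F (i+1)) := by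
      intro i hik
      exact hcont (c i) (hPX (hcP i)) (c (i+1)) (hPX (hcP (i+1))) (hcadj i hik)
    have hF0 : F 0 = u := by rw [hF]; dsimp; rw [hc0, hfu]
    have hFn : F n = v := by rw [hF]; dsimp; rw [hcn, hfv]
    have hb1 := seq_dist_bound (fun j => (F j).1) n (hstep1 F n hFstep)
    have hstep2 : ∀ i < n, |(fun j => (F j).2) (i+1) - (fun j => (F j).2) i| ≤ 1 := by
      intro i hik
      rcases hFstep i hik with h | ⟨-, -, h, -⟩
      · simp [h]
      · rw [abs_sub_comm] at h; exact h
    have hb2 := seq_dist_bound (fun j => (F j).2) n hstep2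
    -- forcing: F i = c i
    have hforce : ∀ i ≤ n, F i = c i := by
      intro i hin
      have b1a := hb1 0 i (by omega) hin
      have b1b := hb1 i n hin (le_refl n)
      have b2a := hb2 0 i (by omega) hin
      have b2b := hb2 i n hin (le_refl n)
      rw [abs_le] at b1a b1b b2a b2b
      simp only [hF0, hFn] at b1a b1b b2a b2b
      have hvu2 : v.2 - u.2 = ε * (v.1 - u.1) := by
        have l1 := hline u hu; have l2 := hline v hv; linarith
      have e1 : (F i).1 = u.1 + i := by push_cast at b1a b1b ⊢; omega
      have e2 : (F i).2 = u.2 + ε * i := by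
        rcases hε with h | h <;> subst h <;> push_cast at b2a b2b ⊢ <;>
          simp at hvu2 <;> omega
      have hcieq : c i = (u.1 + (i:ℤ), u.2 + ε * i) := by
        rw [hc]; dsimp
        have e3 : min i n = i := by omega
        rw [e3]
        have l1 := hline u hu
        refine Prod.ext rfl ?_
        dsimp; push_cast; linarith
      rw [hcieq]
      exact Prod.ext e1 e2
    -- conclude for x
    have hxb := hbound x hx
    have hxeq : x = c ((x.1 - u.1).toNat) := by
      rw [hc]; dsimp
      have e3 : min ((x.1 - u.1).toNat) n = (x.1 - u.1).toNat := by omega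
      rw [e3]
      have : u.1 + ((x.1 - u.1).toNat : ℤ) = x.1 := by omega
      rw [this, ← hpt x hx]
    rw [hxeq]
    exact hforce _ (by omega)
  -- a and b are the two extremes; a ≠ b in first coordinate
  have hne1 : a.1 ≠ b.1 := by
    intro h
    apply hab
    have hl := hline b hb.1
    rw [h] at hl
    refine Prod.ext h ?_
    simp at hl; linarith
  rcases extreme a ha with hA | hA <;> rcases extreme b hb with hB | hB
  · exact absurd (le_antisymm (hB a ha.1) (hA b hb.1)) hne1
  · exact key b a hb.1 ha.1 hfb hfa (fun p hp => ⟨hB p hp, hA p hp⟩)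
  · exact key a b ha.1 hb.1 hfa hfb (fun p hp => ⟨hA p hp, hB p hp⟩)
  · exact absurd (le_antisymm (hA b hb.1) (hB a ha.1)) hne1
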